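/- Let n ≥ 1 be an integer, Δ > 0 a real number, and E : {0,…,n−1} → ℝ a function with E(i+1) − E(i) ≥ Δ for all 0 ≤ i ≤ n−2 (so E is strictly increasing and |E(i) − E(j)| ≥ Δ·|i−j| for all i, j). For any complex n×n matrix X, define the matrix L(X) by L(X)_{ij} = X_{ij}/(E(i) − E(j)) for i ≠ j and L(X)_{ii} = 0. Then ‖L(X)‖ ≤ (π/(√3·Δ))·‖X‖. -/

import Mathlib

private lemma gap_chain (n : ℕ) (Δ : ℝ) (E : Fin n → ℝ)
    (hE : ∀ (i : ℕ) (hi : i + 1 < n), Δ ≤ E ⟨i + 1, hi⟩ - E ⟨i, Nat.lt_of_succ_lt hi⟩) :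
    ∀ (d : ℕ) (i j : Fin n), (i : ℕ) = (j : ℕ) + d + 1 → Δ * (d + 1) ≤ E i - E j := by
  intro d
  induction d with
  | zero =>
    intro i j hij
    have hi : (j : ℕ) + 1 < n := by have := i.isLt; omega
    have h1 : i = ⟨(j : ℕ) + 1, hi⟩ := Fin.ext (by show (i : ℕ) = (j : ℕ) + 1; omega)
    have h2 : j = ⟨(j : ℕ), Nat.lt_of_succ_lt hi⟩ := Fin.ext rfl
    have := hE (j : ℕ) hi
    rw [h1]
    push_cast
    nlinarith [this]
  | succ d ih =>
    intro i j hij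
    have hlt := i.isLt
    have hm : (j : ℕ) + d + 1 < n := by omega
    have h1 := ih ⟨(j : ℕ) + d + 1, hm⟩ j rfl
    have hi2 : (j : ℕ) + d + 1 + 1 < n := by omega
    have h2 := hE ((j : ℕ) + d + 1) hi2
    have hieq : i = ⟨(j : ℕ) + d + 1 + 1, hi2⟩ := Fin.ext (by show (i : ℕ) = (j : ℕ) + d + 1 + 1; omega)
    have h3 : (⟨(j : ℕ) + d + 1, Nat.lt_of_succ_lt hi2⟩ : Fin n) = ⟨(j : ℕ) + d + 1, hm⟩ :=
      Fin.ext rfl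
    rw [hieq]
    rw [h3] at h2
    push_cast at h1 ⊢
    linarith

private lemma gap_abs (n : ℕ) (Δ : ℝ) (hΔ : 0 < Δ) (E : Fin n → ℝ)
    (hE : ∀ (i : ℕ) (hi : i + 1 < n), Δ ≤ E ⟨i + 1, hi⟩ - E ⟨i, Nat.lt_of_succ_lt hi⟩)
    (i j : Fin n) (hij : i ≠ j) :
    Δ * ((((i : ℕ) : ℤ) - ((j : ℕ) : ℤ)).natAbs : ℝ) ≤ |E i - E j| := by
  have hvne : (i : ℕ) ≠ (j : ℕ) := fun h => hij (Fin.ext h)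
  rcases lt_or_gt_of_ne hvne with h | h
  · -- i < j
    obtain ⟨d, hd⟩ : ∃ d : ℕ, (j : ℕ) = (i : ℕ) + d + 1 := ⟨(j : ℕ) - (i : ℕ) - 1, by omega⟩
    have := gap_chain n Δ E hE d j i hd
    have hna : ((((i : ℕ) : ℤ) - ((j : ℕ) : ℤ)).natAbs : ℝ) = (d : ℝ) + 1 := by
      have : (((i : ℕ) : ℤ) - ((j : ℕ) : ℤ)).natAbs = d + 1 := by omega
      rw [this]; push_cast; ring
    rw [hna, abs_sub_comm]
    calc Δ * ((d : ℝ) + 1) ≤ E j - E i := this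
      _ ≤ |E j - E i| := le_abs_self _
  · obtain ⟨d, hd⟩ : ∃ d : ℕ, (i : ℕ) = (j : ℕ) + d + 1 := ⟨(i : ℕ) - (j : ℕ) - 1, by omega⟩
    have := gap_chain n Δ E hE d i j hd
    have hna : ((((i : ℕ) : ℤ) - ((j : ℕ) : ℤ)).natAbs : ℝ) = (d : ℝ) + 1 := by
      have : (((i : ℕ) : ℤ) - ((j : ℕ) : ℤ)).natAbs = d + 1 := by omega
      rw [this]; push_cast; ring
    rw [hna]
    calc Δ * ((d : ℝ) + 1) ≤ E i - E j := this
      _ ≤ |E i - E j| := le_abs_self _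

open Finset in
private lemma row_bound (n : ℕ) (Δ : ℝ) (hΔ : 0 < Δ) (E : Fin n → ℝ)
    (hE : ∀ (i : ℕ) (hi : i + 1 < n), Δ ≤ E ⟨i + 1, hi⟩ - E ⟨i, Nat.lt_of_succ_lt hi⟩)
    (i : Fin n) :
    ∑ k : Fin n, (if i = k then (0:ℝ) else 1 / (E i - E k)) ^ 2 ≤ Real.pi ^ 2 / (3 * Δ ^ 2) := by
  classical
  set nd : Fin n → ℕ := fun k => ((((i : ℕ) : ℤ) - ((k : ℕ) : ℤ)).natAbs) with hnd
  set h : Fin n → ℝ := fun k => if i = k then 0 else 1 / ((nd k : ℝ)) ^ 2 with hh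
  have basel : HasSum (fun m : ℕ => (1 : ℝ) / (m : ℝ) ^ 2) (Real.pi ^ 2 / 6) := hasSum_zeta_two
  have hhalf : ∀ s : Finset (Fin n),
      (∀ x ∈ s, ∀ y ∈ s, nd x = nd y → x = y) →
      ∑ k ∈ s, (1 : ℝ) / ((nd k : ℝ)) ^ 2 ≤ Real.pi ^ 2 / 6 := by
    intro s hs
    have := Finset.sum_image (s := s) (g := nd) (f := fun m : ℕ => (1 : ℝ) / (m : ℝ) ^ 2) hs
    rw [← this]
    exact sum_le_hasSum _ (fun m _ => by positivity) basel
  -- termwise bound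
  have hterm : ∀ k : Fin n,
      (if i = k then (0:ℝ) else 1 / (E i - E k)) ^ 2 ≤ (1 / Δ ^ 2) * h k := by
    intro k
    by_cases hk : i = k
    · simp [hh, hk]
    · rw [if_neg hk, hh]
      simp only [if_neg hk]
      have hge := gap_abs n Δ hΔ E hE i k hk
      have hdpos : (0 : ℝ) < (nd k : ℝ) := by
        have : nd k ≠ 0 := by
          have : (i : ℕ) ≠ (k : ℕ) := fun h => hk (Fin.ext h)
          simp only [hnd]
          omega
        exact_mod_cast Nat.pos_of_ne_zero this
      have h2 : (Δ * (nd k : ℝ)) ^ 2 ≤ (E i - E k) ^ 2 := by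
        rw [← sq_abs (E i - E k)]
        exact pow_le_pow_left₀ (by positivity) hge 2
      have h3 : (1 : ℝ) / (E i - E k) ^ 2 ≤ 1 / (Δ * (nd k : ℝ)) ^ 2 :=
        one_div_le_one_div_of_le (by positivity) h2
      calc (1 / (E i - E k)) ^ 2 = 1 / (E i - E k) ^ 2 := by rw [div_pow, one_pow]
        _ ≤ 1 / (Δ * (nd k : ℝ)) ^ 2 := h3
        _ = (1 / Δ ^ 2) * (1 / ((nd k : ℝ)) ^ 2) := by rw [mul_pow]; ring
  -- sum of h
  set s1 : Finset (Fin n) := univ.filter (fun k => (k : ℕ) < (i : ℕ)) with hs1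
  set s2 : Finset (Fin n) := univ.filter (fun k => (i : ℕ) < (k : ℕ)) with hs2
  have hdisj : Disjoint s1 s2 := by
    rw [Finset.disjoint_left]
    intro k h1 h2
    rw [hs1, Finset.mem_filter] at h1
    rw [hs2, Finset.mem_filter] at h2
    omega
  have hzero : ∀ x ∈ (univ : Finset (Fin n)), x ∉ s1 ∪ s2 → h x = 0 := by
    intro x _ hx
    rw [Finset.mem_union, hs1, hs2, Finset.mem_filter, Finset.mem_filter] at hx
    push_neg at hx
    have : i = x := by
      apply Fin.ext
      have := hx.1 (Finset.mem_univ x)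
      have := hx.2 (Finset.mem_univ x)
      omega
    simp [hh, this]
  have hsum_h : ∑ k : Fin n, h k ≤ Real.pi ^ 2 / 6 + Real.pi ^ 2 / 6 := by
    rw [← Finset.sum_subset (Finset.subset_univ (s1 ∪ s2)) hzero,
      Finset.sum_union hdisj]
    have e1 : ∑ k ∈ s1, h k = ∑ k ∈ s1, (1 : ℝ) / ((nd k : ℝ)) ^ 2 := by
      apply Finset.sum_congr rfl
      intro k hk
      rw [hs1, Finset.mem_filter] at hk
      have : i ≠ k := fun h => by rw [h] at hk; omega
      simp [hh, this]
    have e2 : ∑ k ∈ s2, h k = ∑ k ∈ s2, (1 : ℝ) / ((nd k : ℝ)) ^ 2 := by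
      apply Finset.sum_congr rfl
      intro k hk
      rw [hs2, Finset.mem_filter] at hk
      have : i ≠ k := fun h => by rw [h] at hk; omega
      simp [hh, this]
    rw [e1, e2]
    have i1 : ∀ x ∈ s1, ∀ y ∈ s1, nd x = nd y → x = y := by
      intro x hx y hy hxy
      rw [hs1, Finset.mem_filter] at hx hy
      apply Fin.ext
      simp only [hnd] at hxy
      omega
    have i2 : ∀ x ∈ s2, ∀ y ∈ s2, nd x = nd y → x = y := by
      intro x hx y hy hxy
      rw [hs2, Finset.mem_filter] at hx hy
      apply Fin.ext
      simp only [hnd] at hxy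
      omega
    exact add_le_add (hhalf s1 i1) (hhalf s2 i2)
  calc ∑ k : Fin n, (if i = k then (0:ℝ) else 1 / (E i - E k)) ^ 2
      ≤ ∑ k : Fin n, (1 / Δ ^ 2) * h k := Finset.sum_le_sum (fun k _ => hterm k)
    _ = (1 / Δ ^ 2) * ∑ k : Fin n, h k := by rw [Finset.mul_sum]
    _ ≤ (1 / Δ ^ 2) * (Real.pi ^ 2 / 6 + Real.pi ^ 2 / 6) := by
        apply mul_le_mul_of_nonneg_left hsum_h (by positivity)
    _ = Real.pi ^ 2 / (3 * Δ ^ 2) := by ring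

open Finset in
set_option maxHeartbeats 1000000 in
theorem stmt_4 (n : ℕ) (hn : 1 ≤ n) (Δ : ℝ) (hΔ : 0 < Δ) (E : Fin n → ℝ)
    (hE : ∀ (i : ℕ) (hi : i + 1 < n), Δ ≤ E ⟨i + 1, hi⟩ - E ⟨i, Nat.lt_of_succ_lt hi⟩)
    (X : Matrix (Fin n) (Fin n) ℂ) :
    ‖Matrix.toEuclideanCLM (𝕜 := ℂ)
        (Matrix.of fun i j => if i = j then 0 else X i j / ((E i : ℂ) - (E j : ℂ)))‖ ≤
      Real.pi / (Real.sqrt 3 * Δ) * ‖Matrix.toEuclideanCLM (𝕜 := ℂ) X‖ := by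
  classical
  set C : ℝ := Real.pi / (Real.sqrt 3 * Δ) with hCdef
  have hCpos : 0 < C := by
    apply div_pos Real.pi_pos
    positivity
  have hC2 : C ^ 2 = Real.pi ^ 2 / (3 * Δ ^ 2) := by
    rw [hCdef, div_pow, mul_pow, Real.sq_sqrt (by norm_num : (3:ℝ) ≥ 0)]
  set a : Fin n → Fin n → ℝ := fun i j => if i = j then 0 else 1 / (E i - E j) with ha
  have hrow : ∀ i : Fin n, ∑ k : Fin n, (a i k) ^ 2 ≤ C ^ 2 := by
    intro i
    rw [hC2]
    exact row_bound n Δ hΔ E hE i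
  set M : Matrix (Fin n) (Fin n) ℂ :=
    Matrix.of fun i j => if i = j then 0 else X i j / ((E i : ℂ) - (E j : ℂ)) with hMdef
  have hM : ∀ i j, M i j = ((a i j : ℝ) : ℂ) * X i j := by
    intro i j
    by_cases h : i = j
    · simp [hMdef, ha, h]
    · simp only [hMdef, ha, Matrix.of_apply, if_neg h]
      have hcast : ((E i : ℂ) - (E j : ℂ)) = ((E i - E j : ℝ) : ℂ) := by push_cast; ring
      rw [hcast]
      rw [Complex.ofReal_div, Complex.ofReal_one]
      ring
  set Y := Matrix.toEuclideanCLM (𝕜 := ℂ) X with hY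
  set T := Matrix.toEuclideanCLM (𝕜 := ℂ) M with hT
  refine ContinuousLinearMap.opNorm_le_bound _ (mul_nonneg hCpos.le (norm_nonneg _)) fun v => ?_
  set w : EuclideanSpace ℂ (Fin n) := T v with hw
  have happly : ∀ (A : Matrix (Fin n) (Fin n) ℂ) (x : EuclideanSpace ℂ (Fin n)) (i : Fin n),
      (Matrix.toEuclideanCLM (𝕜 := ℂ) A x) i = ∑ j, A i j * x j := by
    intro A x i
    rfl
  set u : Fin n → EuclideanSpace ℂ (Fin n) := fun k => EuclideanSpace.single k (v k) with hu
  set z : Fin n → EuclideanSpace ℂ (Fin n) :=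
    fun k => (WithLp.equiv 2 (Fin n → ℂ)).symm (fun i => ((a i k : ℝ) : ℂ) * w i) with hz
  have hzik : ∀ k i, z k i = ((a i k : ℝ) : ℂ) * w i := fun k i => rfl
  have hwi : ∀ i, w i = ∑ k, M i k * v k := fun i => happly M v i
  -- key identity
  have key : (inner ℂ w w : ℂ) = ∑ k, (inner ℂ (z k) (Y (u k)) : ℂ) := by
    simp only [PiLp.inner_apply, RCLike.inner_apply']
    rw [Finset.sum_comm]
    refine Finset.sum_congr rfl fun i _ => ?_
    have hterm : ∀ k, (starRingEnd ℂ) (z k i) * (Y (u k)) i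
        = (starRingEnd ℂ) (w i) * (M i k * v k) := by
      intro k
      have h2 : (Y (u k)) i = X i k * v k := by
        rw [hY, happly]
        rw [Finset.sum_eq_single k]
        · rw [hu]; simp [EuclideanSpace.single_apply]
        · intro b _ hb
          rw [hu]
          simp [EuclideanSpace.single_apply, hb]
        · intro hk; exact absurd (Finset.mem_univ k) hk
      rw [hzik, h2, hM i k, map_mul, Complex.conj_ofReal]
      ring
    simp_rw [hterm]
    rw [← Finset.mul_sum, ← hwi i]
  -- norms
  have hnorm2 : ‖w‖ ^ 2 = ‖(inner ℂ w w : ℂ)‖ := by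
    rw [inner_self_eq_norm_sq_to_K (𝕜 := ℂ)]
    simp [norm_pow, RCLike.norm_ofReal, abs_norm]
  have step1 : ‖w‖ ^ 2 ≤ ∑ k, ‖z k‖ * (‖Y‖ * ‖v k‖) := by
    rw [hnorm2, key]
    calc ‖∑ k, (inner ℂ (z k) (Y (u k)) : ℂ)‖ ≤ ∑ k, ‖(inner ℂ (z k) (Y (u k)) : ℂ)‖ :=
          norm_sum_le _ _
      _ ≤ ∑ k, ‖z k‖ * (‖Y‖ * ‖v k‖) := by
          refine Finset.sum_le_sum fun k _ => ?_
          calc ‖(inner ℂ (z k) (Y (u k)) : ℂ)‖ ≤ ‖z k‖ * ‖Y (u k)‖ := norm_inner_le_norm _ _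
            _ ≤ ‖z k‖ * (‖Y‖ * ‖u k‖) := by
                apply mul_le_mul_of_nonneg_left (Y.le_opNorm _) (norm_nonneg _)
            _ = ‖z k‖ * (‖Y‖ * ‖v k‖) := by rw [hu, EuclideanSpace.norm_single]
  have hnormsq : ∀ x : EuclideanSpace ℂ (Fin n), ‖x‖ ^ 2 = ∑ i, ‖x i‖ ^ 2 := by
    intro x
    exact (Real.sq_sqrt (Finset.sum_nonneg fun i _ => sq_nonneg _)).symm ▸
      (by rw [EuclideanSpace.norm_eq])
  have hz2 : ∑ k, ‖z k‖ ^ 2 ≤ C ^ 2 * ‖w‖ ^ 2 := by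
    calc ∑ k, ‖z k‖ ^ 2 = ∑ k, ∑ i, (a i k) ^ 2 * ‖w i‖ ^ 2 := by
          refine Finset.sum_congr rfl fun k _ => ?_
          rw [hnormsq (z k)]
          refine Finset.sum_congr rfl fun i _ => ?_
          rw [hzik, norm_mul, Complex.norm_real, mul_pow, Real.norm_eq_abs, sq_abs]
      _ = ∑ i, (∑ k, (a i k) ^ 2) * ‖w i‖ ^ 2 := by
          rw [Finset.sum_comm]
          exact Finset.sum_congr rfl fun i _ => by rw [Finset.sum_mul]
      _ ≤ ∑ i, C ^ 2 * ‖w i‖ ^ 2 := by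
          refine Finset.sum_le_sum fun i _ => ?_
          exact mul_le_mul_of_nonneg_right (hrow i) (sq_nonneg _)
      _ = C ^ 2 * ‖w‖ ^ 2 := by rw [← Finset.mul_sum, hnormsq w]
  have hCS : ∑ k, ‖z k‖ * ‖v k‖ ≤ C * ‖w‖ * ‖v‖ := by
    have h1 : (∑ k, ‖z k‖ * ‖v k‖) ^ 2 ≤ (∑ k, ‖z k‖ ^ 2) * ∑ k, ‖v k‖ ^ 2 :=
      Finset.sum_mul_sq_le_sq_mul_sq _ _ _
    have h2 : (∑ k, ‖z k‖ * ‖v k‖) ^ 2 ≤ (C * ‖w‖ * ‖v‖) ^ 2 := by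
      calc (∑ k, ‖z k‖ * ‖v k‖) ^ 2 ≤ (∑ k, ‖z k‖ ^ 2) * ∑ k, ‖v k‖ ^ 2 := h1
        _ ≤ (C ^ 2 * ‖w‖ ^ 2) * ‖v‖ ^ 2 := by
            rw [← hnormsq v]
            exact mul_le_mul_of_nonneg_right hz2 (sq_nonneg _)
        _ = (C * ‖w‖ * ‖v‖) ^ 2 := by ring
    have h3 : 0 ≤ ∑ k, ‖z k‖ * ‖v k‖ :=
      Finset.sum_nonneg fun k _ => mul_nonneg (norm_nonneg _) (norm_nonneg _)
    calc ∑ k, ‖z k‖ * ‖v k‖ = Real.sqrt ((∑ k, ‖z k‖ * ‖v k‖) ^ 2) := (Real.sqrt_sq h3).symm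
      _ ≤ Real.sqrt ((C * ‖w‖ * ‖v‖) ^ 2) := Real.sqrt_le_sqrt h2
      _ = C * ‖w‖ * ‖v‖ := Real.sqrt_sq (by have := norm_nonneg w; have := norm_nonneg v; positivity)
  have main : ‖w‖ ^ 2 ≤ ‖Y‖ * (C * ‖w‖ * ‖v‖) := by
    calc ‖w‖ ^ 2 ≤ ∑ k, ‖z k‖ * (‖Y‖ * ‖v k‖) := step1
      _ = ‖Y‖ * ∑ k, ‖z k‖ * ‖v k‖ := by
          rw [Finset.mul_sum]
          exact Finset.sum_congr rfl fun k _ => by ring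
      _ ≤ ‖Y‖ * (C * ‖w‖ * ‖v‖) := mul_le_mul_of_nonneg_left hCS (norm_nonneg _)
  show ‖w‖ ≤ C * ‖Y‖ * ‖v‖
  rcases eq_or_lt_of_le (norm_nonneg w) with h0 | h0
  · rw [← h0]
    exact mul_nonneg (mul_nonneg hCpos.le (norm_nonneg _)) (norm_nonneg _)
  · nlinarith [main, h0]
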